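/- Let M ≥ 5 be prime. Consider the family of M² + M unit vectors in ℂ^M consisting of the normalized Gabor frame vectors (1/√M)·g_{k,l} for k, l ∈ {0,…,M−1} together with the M standard basis vectors e_0,…,e_{M−1} of ℂ^M. Then any two distinct vectors u ≠ v from this family satisfy |⟨u, v⟩| ≤ 1/√M. In particular, adjoining the standard orthonormal basis to the normalized Gabor frame does not increase the maximal pairwise correlation beyond 1/√M. -/

import Mathlib

open scoped BigOperators

/-- The Gabor frame vector `g_{k,l} ∈ ℂ^M`, with
`g_{k,l}(m) = exp(2πi·((m−k)³ + l·m)/M)`. -/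
noncomputable def gabor (M : ℕ) (k l : Fin M) : Fin M → ℂ :=
  fun m => Complex.exp (2 * Real.pi * Complex.I *
    ((((m : ℕ) : ℂ) - ((k : ℕ) : ℂ)) ^ 3 + ((l : ℕ) : ℂ) * ((m : ℕ) : ℂ)) / (M : ℂ))

/-- The inner product `⟨u,v⟩ = ∑_{m} u(m)·conj(v(m))` on `ℂ^M`. -/
noncomputable def gip (M : ℕ) (u v : Fin M → ℂ) : ℂ :=
  ∑ m : Fin M, u m * (starRingEnd ℂ) (v m)

section Helpers

open AddChar

variable {M : ℕ}

lemma abs_stdAddChar [NeZero M] (x : ZMod M) : ‖ZMod.stdAddChar x‖ = 1 := by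
  rw [ZMod.stdAddChar_apply]; exact Circle.norm_coe _

lemma conj_stdAddChar [NeZero M] (j : ℤ) :
    (starRingEnd ℂ) (ZMod.stdAddChar ((j : ℤ) : ZMod M)) =
      ZMod.stdAddChar (((-j : ℤ)) : ZMod M) := by
  rw [ZMod.stdAddChar_coe, ZMod.stdAddChar_coe, ← Complex.exp_conj]
  congr 1
  simp only [map_div₀, map_mul, Complex.conj_I, map_intCast, map_natCast, map_ofNat,
    Complex.conj_ofReal]
  push_cast
  ring

lemma abs_quad_sum [NeZero M] (hM : Nat.Prime M) (hM5 : 5 ≤ M) (a b c : ZMod M) (ha : a ≠ 0) :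
    ‖∑ x : ZMod M, ZMod.stdAddChar (a * x ^ 2 + b * x + c)‖ = Real.sqrt M := by
  haveI : Fact M.Prime := ⟨hM⟩
  classical
  have hchar : ringChar (ZMod M) ≠ 2 := by
    rw [ZMod.ringChar_zmod_n]; omega
  have h2 : (2 : ZMod M) ≠ 0 := Ring.two_ne_zero hchar
  have h2a : (2 : ZMod M) * a ≠ 0 := mul_ne_zero h2 ha
  set ψ : AddChar (ZMod M) ℂ := ZMod.stdAddChar with hψdef
  obtain ⟨t, ht⟩ : ∃ t : ZMod M, 2 * a * t = b := ⟨b / (2 * a), by field_simp⟩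
  obtain ⟨s, hs⟩ : ∃ s : ZMod M, s = a * t ^ 2 - b * t + c := ⟨_, rfl⟩
  have step1 : ∑ x : ZMod M, ψ (a * x ^ 2 + b * x + c)
      = ψ s * ∑ x : ZMod M, ψ (a * x ^ 2) := by
    rw [Finset.mul_sum]
    refine (Fintype.sum_equiv (Equiv.subRight t) _ _ fun y => ?_).symm
    have hy : a * (Equiv.subRight t y) ^ 2 + b * (Equiv.subRight t y) + c
        = s + a * y ^ 2 := by
      simp only [Equiv.subRight_apply, hs]
      linear_combination (-y) * ht
    rw [hy, map_add_eq_mul]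
  set ψa : AddChar (ZMod M) ℂ := ψ.mulShift a with hψadef
  set χ : MulChar (ZMod M) ℂ :=
    (quadraticChar (ZMod M)).ringHomComp (Int.castRingHom ℂ) with hχdef
  have hψa1 : ψa ≠ 1 := ZMod.isPrimitive_stdAddChar M ha
  have hψaprim : ψa.IsPrimitive := AddChar.IsPrimitive.of_ne_one hψa1
  have step2 : ∑ x : ZMod M, ψ (a * x ^ 2) = gaussSum χ ψa := by
    have h1 : ∀ x : ZMod M, ψ (a * x ^ 2) = ψa (x ^ 2) := fun x => by
      rw [hψadef, AddChar.mulShift_apply]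
    simp_rw [h1]
    calc ∑ x : ZMod M, ψa (x ^ 2)
        = ∑ j : ZMod M, ∑ _x ∈ Finset.univ.filter (fun x : ZMod M => x ^ 2 = j), ψa j :=
          (Finset.sum_fiberwise_of_maps_to' (fun x _ => Finset.mem_univ _) _).symm
      _ = ∑ j : ZMod M, (((quadraticChar (ZMod M) j + 1 : ℤ) : ℂ)) * ψa j := by
          refine Finset.sum_congr rfl fun j _ => ?_
          rw [Finset.sum_const, nsmul_eq_mul]
          congr 1
          have hcount := quadraticChar_card_sqrts hchar j
          have hset : ({x : ZMod M | x ^ 2 = j}).toFinset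
              = Finset.univ.filter (fun x : ZMod M => x ^ 2 = j) := by
            ext x; simp
          rw [hset] at hcount
          rw [← hcount]
          push_cast
          rfl
      _ = gaussSum χ ψa + ∑ j : ZMod M, ψa j := by
          rw [gaussSum, ← Finset.sum_add_distrib]
          refine Finset.sum_congr rfl fun j _ => ?_
          push_cast
          rw [hχdef]
          simp only [MulChar.ringHomComp_apply, eq_intCast]
          ring
      _ = gaussSum χ ψa := by
          rw [AddChar.sum_eq_zero_of_ne_one hψa1, add_zero]
  have hχ1 : χ ≠ 1 := by
    rw [hχdef, MulChar.ringHomComp_ne_one_iff (Int.cast_injective)]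
    exact quadraticChar_ne_one hchar
  have hχ2 : χ.IsQuadratic := (quadraticChar_isQuadratic (ZMod M)).comp _
  have hcard : (Fintype.card (ZMod M) : ℂ) = (M : ℂ) := by rw [ZMod.card]
  have hsq : gaussSum χ ψa ^ 2 = χ (-1) * M := by
    rw [gaussSum_sq hχ1 hχ2 hψaprim, hcard]
  have hgne : gaussSum χ ψa ≠ 0 := by
    refine gaussSum_ne_zero_of_nontrivial ?_ hχ1 hψaprim
    rw [hcard]
    exact_mod_cast Nat.cast_ne_zero.mpr hM.pos.ne'
  have habsχ : ‖χ (-1)‖ = 1 := by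
    rcases hχ2 (-1) with h | h | h
    · exfalso; apply hgne
      have h0 : gaussSum χ ψa ^ 2 = 0 := by rw [hsq, h, zero_mul]
      exact pow_eq_zero_iff (n := 2) two_ne_zero |>.mp h0
    · rw [h]; simp
    · rw [h]; simp
  have habs2 : ‖gaussSum χ ψa‖ ^ 2 = (M : ℝ) := by
    rw [← norm_pow, hsq, norm_mul, habsχ, one_mul, Complex.norm_natCast]
  have habs : ‖gaussSum χ ψa‖ = Real.sqrt M := by
    rw [← Real.sqrt_sq (norm_nonneg _), habs2]
  rw [step1, norm_mul, step2, habs, abs_stdAddChar, one_mul]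

lemma lin_sum [NeZero M] (hM : Nat.Prime M) {b : ZMod M} (hb : b ≠ 0) :
    ∑ x : ZMod M, ZMod.stdAddChar (b * x) = 0 := by
  haveI : Fact M.Prime := ⟨hM⟩
  have h := AddChar.sum_mulShift b (ZMod.isPrimitive_stdAddChar M)
  rw [if_neg hb] at h
  push_cast at h
  rw [← h]
  exact Finset.sum_congr rfl fun x _ => by rw [mul_comm]

lemma gabor_eq [NeZero M] (k l m : Fin M) :
    gabor M k l m =
      ZMod.stdAddChar (((((m : ℤ) - (k : ℤ)) ^ 3 + (l : ℤ) * (m : ℤ)) : ℤ) : ZMod M) := by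
  rw [ZMod.stdAddChar_coe, gabor]
  congr 1
  push_cast
  ring

lemma abs_gabor [NeZero M] (k l m : Fin M) : ‖gabor M k l m‖ = 1 := by
  rw [gabor_eq, ZMod.stdAddChar_apply]; exact Circle.norm_coe _

lemma gabor_mul_conj [NeZero M] (k l k' l' m : Fin M) :
    gabor M k l m * (starRingEnd ℂ) (gabor M k' l' m) =
      ZMod.stdAddChar (((((m : ℤ) - (k : ℤ)) ^ 3 + (l : ℤ) * (m : ℤ)
        - (((m : ℤ) - (k' : ℤ)) ^ 3 + (l' : ℤ) * (m : ℤ))) : ℤ) : ZMod M) := by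
  rw [gabor_eq k l m, gabor_eq k' l' m, conj_stdAddChar, ← AddChar.map_add_eq_mul]
  congr 1
  push_cast
  ring

lemma natCast_fin_bijective [NeZero M] :
    Function.Bijective (fun m : Fin M => ((m : ℕ) : ZMod M)) := by
  rw [Fintype.bijective_iff_injective_and_card]
  constructor
  · intro a b hab
    have h2 : ((a : ℕ) : ZMod M) = ((b : ℕ) : ZMod M) := hab
    have h3 := congrArg ZMod.val h2
    rw [ZMod.val_cast_of_lt a.is_lt, ZMod.val_cast_of_lt b.is_lt] at h3
    exact Fin.ext h3
  · simp [ZMod.card]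

lemma gip_gabor [NeZero M] (k l k' l' : Fin M) :
    gip M (gabor M k l) (gabor M k' l') =
      ∑ x : ZMod M, ZMod.stdAddChar
        ((3 * (((k' : ℕ) : ZMod M) - ((k : ℕ) : ZMod M))) * x ^ 2 +
         (3 * (((k : ℕ) : ZMod M) ^ 2 - ((k' : ℕ) : ZMod M) ^ 2)
            + ((l : ℕ) : ZMod M) - ((l' : ℕ) : ZMod M)) * x +
         (((k' : ℕ) : ZMod M) ^ 3 - ((k : ℕ) : ZMod M) ^ 3)) := by
  rw [gip]
  refine Fintype.sum_bijective _ natCast_fin_bijective _ _ fun m => ?_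
  rw [gabor_mul_conj]
  congr 1
  push_cast
  ring

lemma gip_single_right (u : Fin M → ℂ) (m : Fin M) :
    gip M u (Pi.single m 1) = u m := by
  rw [gip, Finset.sum_eq_single m]
  · simp
  · intro b _ hb
    simp [Pi.single_eq_of_ne hb]
  · intro h
    exact absurd (Finset.mem_univ m) h

lemma gip_single_left (v : Fin M → ℂ) (m : Fin M) :
    gip M (Pi.single m 1) v = (starRingEnd ℂ) (v m) := by
  rw [gip, Finset.sum_eq_single m]
  · simp
  · intro b _ hb
    simp [Pi.single_eq_of_ne hb]
  · intro h
    exact absurd (Finset.mem_univ m) h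

lemma gip_smul_smul (r : ℝ) (u v : Fin M → ℂ) :
    gip M ((r : ℂ) • u) ((r : ℂ) • v) = ((r ^ 2 : ℝ) : ℂ) * gip M u v := by
  rw [gip, gip, Finset.mul_sum]
  refine Finset.sum_congr rfl fun m _ => ?_
  simp only [Pi.smul_apply, smul_eq_mul, map_mul, Complex.conj_ofReal]
  push_cast
  ring

end Helpers

/-- For a prime `M ≥ 5`, any two distinct vectors from the family consisting of the
normalized Gabor vectors `(1/√M)·g_{k,l}` together with the `M` standard basis vectors
of `ℂ^M` have correlation modulus at most `1/√M`. -/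
theorem gabor_plus_standard_basis_correlation (M : ℕ) (hM : Nat.Prime M) (hM5 : 5 ≤ M)
    (F : Set (Fin M → ℂ))
    (hF : F = (Set.range fun p : Fin M × Fin M =>
        ((1 / Real.sqrt M : ℝ) : ℂ) • gabor M p.1 p.2) ∪
      (Set.range fun m : Fin M => (Pi.single m 1 : Fin M → ℂ)))
    (u v : Fin M → ℂ) (hu : u ∈ F) (hv : v ∈ F) (huv : u ≠ v) :
    ‖gip M u v‖ ≤ 1 / Real.sqrt M := by
  haveI : Fact M.Prime := ⟨hM⟩
  haveI : NeZero M := ⟨hM.pos.ne'⟩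
  have hMpos : (0 : ℝ) < M := by exact_mod_cast hM.pos
  have hsq : 0 < Real.sqrt M := Real.sqrt_pos.mpr hMpos
  have hr0 : (0 : ℝ) ≤ 1 / Real.sqrt M := by positivity
  have hfin : Function.Injective (fun m : Fin M => ((m : ℕ) : ZMod M)) :=
    natCast_fin_bijective.1
  subst hF
  rcases hu with hu | hu <;> rcases hv with hv | hv
  · -- gabor vs gabor
    obtain ⟨⟨k, l⟩, rfl⟩ := hu
    obtain ⟨⟨k', l'⟩, rfl⟩ := hv
    rw [gip_smul_smul]
    rw [norm_mul, Complex.norm_real, Real.norm_eq_abs, abs_of_nonneg (by positivity)]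
    by_cases hk : k = k'
    · subst hk
      -- same k, different l
      have hl : l ≠ l' := by
        intro h; exact huv (by rw [h])
      have hb : ((l : ℕ) : ZMod M) - ((l' : ℕ) : ZMod M) ≠ 0 := by
        rw [sub_ne_zero]
        exact fun h => hl (hfin h)
      rw [gip_gabor]
      have hz : ∀ x : ZMod M,
          (3 * (((k : ℕ) : ZMod M) - ((k : ℕ) : ZMod M))) * x ^ 2 +
            (3 * (((k : ℕ) : ZMod M) ^ 2 - ((k : ℕ) : ZMod M) ^ 2)
              + ((l : ℕ) : ZMod M) - ((l' : ℕ) : ZMod M)) * x +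
            (((k : ℕ) : ZMod M) ^ 3 - ((k : ℕ) : ZMod M) ^ 3)
          = (((l : ℕ) : ZMod M) - ((l' : ℕ) : ZMod M)) * x := by
        intro x; ring
      simp_rw [hz]
      rw [lin_sum hM hb]
      simpa using hr0
    · -- different k : quadratic Gauss sum
      have h3 : ((3 : ℕ) : ZMod M) ≠ 0 := by
        intro h
        rw [ZMod.natCast_eq_zero_iff] at h
        have := Nat.le_of_dvd (by norm_num) h
        omega
      have ha : (3 : ZMod M) * (((k' : ℕ) : ZMod M) - ((k : ℕ) : ZMod M)) ≠ 0 := by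
        refine mul_ne_zero ?_ ?_
        · exact_mod_cast h3
        · rw [sub_ne_zero]
          exact fun h => hk (hfin h).symm
      rw [gip_gabor, abs_quad_sum hM hM5 _ _ _ ha]
      have heq : (1 / Real.sqrt M) ^ 2 * Real.sqrt M = 1 / Real.sqrt M := by
        rw [one_div, pow_two, mul_assoc, inv_mul_cancel₀ hsq.ne', mul_one]
      rw [heq]
  · -- gabor vs basis
    obtain ⟨⟨k, l⟩, rfl⟩ := hu
    obtain ⟨m, rfl⟩ := hv
    rw [gip_single_right]
    simp only [Pi.smul_apply, smul_eq_mul]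
    rw [norm_mul, Complex.norm_real, Real.norm_eq_abs, abs_of_nonneg hr0, abs_gabor, mul_one]
  · -- basis vs gabor
    obtain ⟨m, rfl⟩ := hu
    obtain ⟨⟨k, l⟩, rfl⟩ := hv
    rw [gip_single_left]
    simp only [Pi.smul_apply, smul_eq_mul, map_mul, Complex.conj_ofReal]
    rw [norm_mul, Complex.norm_real, Real.norm_eq_abs, Complex.norm_conj, abs_of_nonneg hr0, abs_gabor, mul_one]
  · -- basis vs basis
    obtain ⟨m, rfl⟩ := hu
    obtain ⟨m', rfl⟩ := hv
    have hm : m ≠ m' := by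
      intro h; exact huv (by rw [h])
    rw [gip_single_right]
    simp only [Pi.single_eq_of_ne (Ne.symm hm)]
    simpa using hr0
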